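/- Let p ≥ 1, let γ : [0, s_f] → ℝᵖ be three times continuously differentiable with ‖γ′(s)‖ = 1 for all s, set k(s) = ‖γ″(s)‖ and k₂(s) = ‖γ‴(s)‖. Let A, J > 0 and μ⁺ : [0, s_f] → (0, ∞), and let w : [0, s_f] → ℝ be twice continuously differentiable with 0 < w(s) ≤ μ⁺(s), (1/2)|w′(s)| ≤ A, and (1/2)|w″(s)|·√(w(s)) ≤ J for all s. Let λ : [0, t_f] → [0, s_f] be differentiable with λ′(t) = √(w(λ(t))) and define q(t) = γ(λ(t)). Then for all t: ‖q′(t)‖ ≤ √(μ⁺(λ(t))), ‖q″(t)‖ ≤ A + k(λ(t))·μ⁺(λ(t)), and ‖q‴(t)‖ ≤ 3·k(λ(t))·A·√(μ⁺(λ(t))) + 2J + k₂(λ(t))·μ⁺(λ(t))^{3/2}. -/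

import Mathlib

/-- Bounds on velocity, acceleration and jerk of the trajectory `q(t) = γ(λ(t))`
when the squared-speed profile `w` is feasible for the continuous smooth
minimum-time velocity planning problem with bounds `μ⁺`, `A`, `J`:
`‖q′‖ ≤ √μ⁺(λ)`, `‖q″‖ ≤ A + k(λ)·μ⁺(λ)` and
`‖q‴‖ ≤ 3k(λ)·A·√μ⁺(λ) + 2J + k₂(λ)·μ⁺(λ)^{3/2}`, where `k = ‖γ″‖`, `k₂ = ‖γ‴‖`. -/
theorem stmt_18 (p : ℕ) (hp : 1 ≤ p) (sf tf : ℝ) (hsf : 0 ≤ sf) (htf : 0 ≤ tf)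
    (γ : ℝ → EuclideanSpace ℝ (Fin p)) (w lam μplus : ℝ → ℝ) (A J : ℝ)
    (hA : 0 < A) (hJ : 0 < J)
    (hγ : ContDiff ℝ 3 γ)
    (hγ1 : ∀ s ∈ Set.Icc (0 : ℝ) sf, ‖deriv γ s‖ = 1)
    (hμpos : ∀ s ∈ Set.Icc (0 : ℝ) sf, 0 < μplus s)
    (hw : ContDiff ℝ 2 w)
    (hwpos : ∀ s ∈ Set.Icc (0 : ℝ) sf, 0 < w s)
    (hwub : ∀ s ∈ Set.Icc (0 : ℝ) sf, w s ≤ μplus s)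
    (hwacc : ∀ s ∈ Set.Icc (0 : ℝ) sf, 1 / 2 * |deriv w s| ≤ A)
    (hwjerk : ∀ s ∈ Set.Icc (0 : ℝ) sf,
      1 / 2 * |deriv (deriv w) s| * Real.sqrt (w s) ≤ J)
    (hlamrange : ∀ t ∈ Set.Icc (0 : ℝ) tf, lam t ∈ Set.Icc (0 : ℝ) sf)
    (hlam : ∀ t, HasDerivAt lam (Real.sqrt (w (lam t))) t)
    (q : ℝ → EuclideanSpace ℝ (Fin p)) (hq : q = fun t => γ (lam t)) :
    ∀ t ∈ Set.Icc (0 : ℝ) tf,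
      ‖deriv q t‖ ≤ Real.sqrt (μplus (lam t))
      ∧ ‖deriv (deriv q) t‖ ≤ A + ‖deriv (deriv γ) (lam t)‖ * μplus (lam t)
      ∧ ‖deriv (deriv (deriv q)) t‖
          ≤ 3 * ‖deriv (deriv γ) (lam t)‖ * A * Real.sqrt (μplus (lam t))
            + 2 * J + ‖deriv (deriv (deriv γ)) (lam t)‖ * μplus (lam t) ^ ((3 : ℝ) / 2) := by
  subst hq
  -- smoothness facts
  have hγd : Differentiable ℝ γ := hγ.differentiable (by norm_num)
  have hγ' : ContDiff ℝ 2 (deriv γ) := by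
    rw [show (3 : WithTop ℕ∞) = 2 + 1 by norm_num, contDiff_succ_iff_deriv] at hγ
    exact hγ.2.2
  have hγ'' : ContDiff ℝ 1 (deriv (deriv γ)) := by
    rw [show (2 : WithTop ℕ∞) = 1 + 1 by norm_num, contDiff_succ_iff_deriv] at hγ'
    exact hγ'.2.2
  have hγ'd : Differentiable ℝ (deriv γ) := hγ'.differentiable (by norm_num)
  have hγ''d : Differentiable ℝ (deriv (deriv γ)) := hγ''.differentiable one_ne_zero
  have hwd : Differentiable ℝ w := hw.differentiable (by norm_num)
  have hw' : ContDiff ℝ 1 (deriv w) := by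
    rw [show (2 : WithTop ℕ∞) = 1 + 1 by norm_num, contDiff_succ_iff_deriv] at hw
    exact hw.2.2
  have hw'd : Differentiable ℝ (deriv w) := hw'.differentiable one_ne_zero
  have hlamd : Differentiable ℝ lam := fun t => (hlam t).differentiableAt
  -- first derivative of q, valid everywhere
  have hq1 : ∀ t, HasDerivAt (fun t => γ (lam t))
      (Real.sqrt (w (lam t)) • deriv γ (lam t)) t := fun t =>
    (hγd (lam t)).hasDerivAt.scomp t (hlam t)
  have hq1' : deriv (fun t => γ (lam t))
      = fun t => Real.sqrt (w (lam t)) • deriv γ (lam t) :=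
    funext fun t => (hq1 t).deriv
  -- derivative of w ∘ lam
  have hwl : ∀ t, HasDerivAt (fun t => w (lam t))
      (deriv w (lam t) * Real.sqrt (w (lam t))) t := fun t =>
    (hwd (lam t)).hasDerivAt.comp t (hlam t)
  -- derivative of √(w ∘ lam) on the positivity set
  have hv : ∀ t, 0 < w (lam t) →
      HasDerivAt (fun t => Real.sqrt (w (lam t))) (deriv w (lam t) / 2) t := by
    intro t ht
    have h := (hwl t).sqrt (ne_of_gt ht)
    convert h using 1
    have hs : Real.sqrt (w (lam t)) ≠ 0 := ne_of_gt (Real.sqrt_pos.mpr ht)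
    field_simp
  -- second derivative formula
  set g₂ : ℝ → EuclideanSpace ℝ (Fin p) := fun t =>
    (deriv w (lam t) / 2) • deriv γ (lam t)
      + w (lam t) • deriv (deriv γ) (lam t) with hg₂def
  have hq2 : ∀ t, 0 < w (lam t) →
      HasDerivAt (deriv (fun t => γ (lam t))) (g₂ t) t := by
    intro t ht
    rw [hq1']
    have h1 : HasDerivAt (fun t => deriv γ (lam t))
        (Real.sqrt (w (lam t)) • deriv (deriv γ) (lam t)) t :=
      (hγ'd (lam t)).hasDerivAt.scomp t (hlam t)
    have h2 := (hv t ht).smul h1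
    convert h2 using 1
    case e'_4 => rfl
    case e'_5 => rfl
    case e'_6 => rfl
    case e'_8 => rfl
    rw [hg₂def]
    rw [smul_smul, Real.mul_self_sqrt ht.le, add_comm]
  have hderiv2 : Set.EqOn (deriv (deriv (fun t => γ (lam t)))) g₂ {t | 0 < w (lam t)} :=
    fun t ht => (hq2 t ht).deriv
  -- main goal
  intro t₀ ht₀
  have hs₀ := hlamrange t₀ ht₀
  have hw0 : 0 < w (lam t₀) := hwpos _ hs₀
  have hcont : Continuous fun t => w (lam t) := hwd.continuous.comp hlamd.continuous
  have hU : IsOpen {t | 0 < w (lam t)} := isOpen_lt continuous_const hcont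
  have ht₀U : t₀ ∈ {t | 0 < w (lam t)} := hw0
  -- third derivative at t₀
  have hA1 : HasDerivAt (fun t => deriv w (lam t) / 2)
      (deriv (deriv w) (lam t₀) * Real.sqrt (w (lam t₀)) / 2) t₀ :=
    ((hw'd (lam t₀)).hasDerivAt.comp t₀ (hlam t₀)).div_const 2
  have hB1 : HasDerivAt (fun t => deriv γ (lam t))
      (Real.sqrt (w (lam t₀)) • deriv (deriv γ) (lam t₀)) t₀ :=
    (hγ'd (lam t₀)).hasDerivAt.scomp t₀ (hlam t₀)
  have hB2 : HasDerivAt (fun t => deriv (deriv γ) (lam t))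
      (Real.sqrt (w (lam t₀)) • deriv (deriv (deriv γ)) (lam t₀)) t₀ :=
    (hγ''d (lam t₀)).hasDerivAt.scomp t₀ (hlam t₀)
  have hq3 : HasDerivAt g₂
      (((deriv w (lam t₀) / 2) • (Real.sqrt (w (lam t₀)) • deriv (deriv γ) (lam t₀))
          + (deriv (deriv w) (lam t₀) * Real.sqrt (w (lam t₀)) / 2) • deriv γ (lam t₀))
        + (w (lam t₀) • (Real.sqrt (w (lam t₀)) • deriv (deriv (deriv γ)) (lam t₀))
          + (deriv w (lam t₀) * Real.sqrt (w (lam t₀))) • deriv (deriv γ) (lam t₀))) t₀ :=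
    (hA1.smul hB1).add ((hwl t₀).smul hB2)
  have hEq : deriv (deriv (fun t => γ (lam t))) =ᶠ[nhds t₀] g₂ :=
    Filter.eventuallyEq_of_mem (hU.mem_nhds ht₀U) hderiv2
  have h3eq : deriv (deriv (deriv (fun t => γ (lam t)))) t₀ = deriv g₂ t₀ := hEq.deriv_eq
  -- abbreviations
  set s₀ := lam t₀ with hs₀def
  set v₀ := Real.sqrt (w s₀) with hv₀def
  have hv₀pos : 0 < v₀ := Real.sqrt_pos.mpr hw0
  have hμ0 : 0 < μplus s₀ := hμpos _ hs₀
  have hvle : v₀ ≤ Real.sqrt (μplus s₀) := Real.sqrt_le_sqrt (hwub _ hs₀)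
  have hγ1' : ‖deriv γ s₀‖ = 1 := hγ1 _ hs₀
  have hk : (0:ℝ) ≤ ‖deriv (deriv γ) s₀‖ := norm_nonneg _
  have hk2 : (0:ℝ) ≤ ‖deriv (deriv (deriv γ)) s₀‖ := norm_nonneg _
  have hwA : |deriv w s₀| ≤ 2 * A := by have := hwacc _ hs₀; linarith
  have hwJ : |deriv (deriv w) s₀| * v₀ ≤ 2 * J := by have := hwjerk _ hs₀; linarith
  have hw32 : w s₀ * v₀ ≤ μplus s₀ ^ ((3:ℝ)/2) := by
    have h1 : w s₀ * v₀ = (w s₀) ^ ((3:ℝ)/2) := by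
      rw [hv₀def, show (3:ℝ)/2 = 1 + 1/2 by norm_num,
        Real.rpow_add' hw0.le (by norm_num), Real.rpow_one, ← Real.sqrt_eq_rpow]
    rw [h1]
    exact Real.rpow_le_rpow hw0.le (hwub _ hs₀) (by norm_num)
  refine ⟨?_, ?_, ?_⟩
  · rw [hq1', norm_smul, Real.norm_eq_abs, abs_of_nonneg (Real.sqrt_nonneg _), hγ1', mul_one]
    exact hvle
  · rw [hderiv2 ht₀U, hg₂def]
    have hb : ‖(deriv w s₀ / 2) • deriv γ s₀ + w s₀ • deriv (deriv γ) s₀‖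
        ≤ |deriv w s₀ / 2| + w s₀ * ‖deriv (deriv γ) s₀‖ := by
      refine (norm_add_le _ _).trans ?_
      rw [norm_smul, norm_smul, Real.norm_eq_abs, Real.norm_eq_abs, hγ1', mul_one,
        abs_of_pos hw0]
    refine hb.trans ?_
    have : ‖deriv (deriv γ) s₀‖ * w s₀ ≤ ‖deriv (deriv γ) s₀‖ * μplus s₀ :=
      mul_le_mul_of_nonneg_left (hwub _ hs₀) hk
    rw [abs_div, show |(2:ℝ)| = 2 by norm_num]
    have := hwA
    nlinarith [this, mul_le_mul_of_nonneg_left (hwub _ hs₀) hk]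
  · rw [h3eq, hq3.deriv]
    have hb : ‖((deriv w s₀ / 2) • (v₀ • deriv (deriv γ) s₀)
          + (deriv (deriv w) s₀ * v₀ / 2) • deriv γ s₀)
        + (w s₀ • (v₀ • deriv (deriv (deriv γ)) s₀)
          + (deriv w s₀ * v₀) • deriv (deriv γ) s₀)‖
        ≤ (|deriv w s₀ / 2| * (v₀ * ‖deriv (deriv γ) s₀‖)
            + |deriv (deriv w) s₀ * v₀ / 2|)
          + (w s₀ * (v₀ * ‖deriv (deriv (deriv γ)) s₀‖)
            + |deriv w s₀ * v₀| * ‖deriv (deriv γ) s₀‖) := by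
      refine (norm_add_le _ _).trans
        (add_le_add ((norm_add_le _ _).trans ?_) ((norm_add_le _ _).trans ?_))
      · rw [norm_smul, norm_smul, norm_smul, Real.norm_eq_abs, Real.norm_eq_abs,
          Real.norm_eq_abs, hγ1', mul_one, abs_of_nonneg (Real.sqrt_nonneg _)]
      · rw [norm_smul, norm_smul, norm_smul, Real.norm_eq_abs, Real.norm_eq_abs,
          Real.norm_eq_abs, abs_of_pos hw0, abs_of_nonneg (Real.sqrt_nonneg _)]
    refine hb.trans ?_
    have e1 : |deriv w s₀| * v₀ ≤ 2 * A * Real.sqrt (μplus s₀) :=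
      mul_le_mul hwA hvle hv₀pos.le (by positivity)
    have e2 : |deriv (deriv w) s₀ * v₀ / 2| ≤ J := by
      rw [abs_div, abs_mul, abs_of_nonneg hv₀pos.le]
      have := hwJ
      rw [show |(2:ℝ)| = 2 by norm_num]
      linarith
    have e3 : w s₀ * (v₀ * ‖deriv (deriv (deriv γ)) s₀‖)
        ≤ ‖deriv (deriv (deriv γ)) s₀‖ * μplus s₀ ^ ((3:ℝ)/2) := by
      rw [← mul_assoc]
      rw [mul_comm (w s₀ * v₀) _]
      exact mul_le_mul_of_nonneg_left hw32 hk2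
    have e4 : |deriv w s₀ / 2| * (v₀ * ‖deriv (deriv γ) s₀‖)
          + |deriv w s₀ * v₀| * ‖deriv (deriv γ) s₀‖
        ≤ 3 * ‖deriv (deriv γ) s₀‖ * A * Real.sqrt (μplus s₀) := by
      rw [abs_div, abs_mul, abs_of_nonneg hv₀pos.le, show |(2:ℝ)| = 2 by norm_num]
      nlinarith [mul_le_mul_of_nonneg_right e1 hk]
    linarith
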